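/- arXiv:0810.0729 — 2 statements merged into one kernel-verified Lean document; each statement's English description precedes it below -/
import Mathlib

section
/- Let M_0, M_1, M_2 be the second-order differential operators on ℚ[q_1, q_2, …] defined by M_a = (1/2) Σ_{i+j≥a, i,j≥1} q_i q_j (i+j-a) ∂/∂q_{i+j-a} + (1/2) Σ_{i,j≥1} q_{i+j+a} i j ∂²/(∂q_i ∂q_j) for a = 0, 1, 2, and let Λ_1 = Σ_{i≥2} (i-1) q_i ∂/∂q_{i-1}. Then [M_0, Λ_1] = 2 M_1 as operators on polynomials. -/
open MvPolynomial

/-- Λ₁ = Σ_{i≥2} (i-1) q_i ∂/∂q_{i-1}, reindexed by i = j+1. -/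
noncomputable def Lam1 (f : MvPolynomial ℕ ℚ) : MvPolynomial ℕ ℚ :=
  ∑ᶠ j : ℕ, (j : ℚ) • (X (j + 1) * pderiv j f)

/-- M_a = ½ Σ_{i,j≥1, i+j-a≥1} (i+j-a) q_i q_j ∂/∂q_{i+j-a}
        + ½ Σ_{i,j≥1} i j q_{i+j+a} ∂²/∂q_i∂q_j. -/
noncomputable def M (a : ℕ) (f : MvPolynomial ℕ ℚ) : MvPolynomial ℕ ℚ :=
  (1 / 2 : ℚ) •
    ((∑ᶠ i : ℕ, ∑ᶠ j : ℕ,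
        if 1 ≤ i ∧ 1 ≤ j ∧ 1 ≤ i + j - a then
          ((i + j - a : ℕ) : ℚ) • (X i * X j * pderiv (i + j - a) f)
        else 0) +
      (∑ᶠ i : ℕ, ∑ᶠ j : ℕ,
        ((i : ℚ) * (j : ℚ)) • (X (i + j + a) * pderiv i (pderiv j f))))

open Finset

section Auxiliary

/-- Partial derivatives commute. -/
lemma pd_comm (i j : ℕ) (f : MvPolynomial ℕ ℚ) :
    pderiv i (pderiv j f) = pderiv j (pderiv i f) := by
  induction f using MvPolynomial.induction_on' with
  | monomial s a =>
    rcases eq_or_ne i j with rfl | hij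
    · rfl
    · simp only [pderiv_monomial]
      rw [Finsupp.tsub_apply, Finsupp.tsub_apply, Finsupp.single_apply, Finsupp.single_apply]
      simp [hij, Ne.symm hij, tsub_right_comm]
      ring_nf
  | add p q hp hq => simp [hp, hq]

lemma pd_comm3 (k i j : ℕ) (f : MvPolynomial ℕ ℚ) :
    pderiv k (pderiv i (pderiv j f)) = pderiv i (pderiv j (pderiv k f)) := by
  rw [pd_comm k i, pd_comm k j]

/-- finite-range version of Λ₁ -/
noncomputable def LS (R : ℕ) (f : MvPolynomial ℕ ℚ) : MvPolynomial ℕ ℚ :=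
  ∑ k ∈ range R, (k : ℚ) • (X (k + 1) * pderiv k f)

/-- finite-range (index-shifted) version of the first part of `M a`, valid for `a ≤ 1`. -/
noncomputable def AS (a K : ℕ) (f : MvPolynomial ℕ ℚ) : MvPolynomial ℕ ℚ :=
  ∑ i ∈ range K, ∑ j ∈ range K,
    ((i + j + (2 - a) : ℕ) : ℚ) • (X (i + 1) * X (j + 1) * pderiv (i + j + (2 - a)) f)

/-- finite-range version of the second part of `M a`. -/
noncomputable def BS (a K : ℕ) (f : MvPolynomial ℕ ℚ) : MvPolynomial ℕ ℚ :=
  ∑ i ∈ range K, ∑ j ∈ range K,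
    ((i : ℚ) * (j : ℚ)) • (X (i + j + a) * pderiv i (pderiv j f))

lemma Lam1_eq (R : ℕ) (f : MvPolynomial ℕ ℚ) (hb : ∀ k, R ≤ k → pderiv k f = 0) :
    Lam1 f = LS R f := by
  rw [Lam1, LS, finsum_eq_sum_of_support_subset]
  intro j hj
  simp only [Function.mem_support, ne_eq] at hj
  by_contra h
  simp only [coe_range, Set.mem_Iio, not_lt] at h
  exact hj (by rw [hb j h, mul_zero, smul_zero])

lemma M_eq (a K : ℕ) (ha : a ≤ 1) (f : MvPolynomial ℕ ℚ)
    (hb : ∀ k, K ≤ k → pderiv k f = 0) :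
    M a f = (1 / 2 : ℚ) • (AS a K f + BS a K f) := by
  have key : ∀ i j : ℕ, K ≤ i + j - a → 1 ≤ j →
      (if 1 ≤ i ∧ 1 ≤ j ∧ 1 ≤ i + j - a then
        ((i + j - a : ℕ) : ℚ) • (X i * X j * pderiv (i + j - a) f)
        else (0 : MvPolynomial ℕ ℚ)) = 0 := by
    intro i j h hj
    rw [hb _ h, mul_zero, smul_zero, ite_self]
  have hA : (∑ᶠ i : ℕ, ∑ᶠ j : ℕ,
      if 1 ≤ i ∧ 1 ≤ j ∧ 1 ≤ i + j - a then
        ((i + j - a : ℕ) : ℚ) • (X i * X j * pderiv (i + j - a) f)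
      else 0) = AS a K f := by
    have inner : ∀ i : ℕ, (∑ᶠ j : ℕ,
        if 1 ≤ i ∧ 1 ≤ j ∧ 1 ≤ i + j - a then
          ((i + j - a : ℕ) : ℚ) • (X i * X j * pderiv (i + j - a) f)
        else 0) = ∑ j ∈ range (K + 1),
          (if 1 ≤ i ∧ 1 ≤ j ∧ 1 ≤ i + j - a then
          ((i + j - a : ℕ) : ℚ) • (X i * X j * pderiv (i + j - a) f)
          else 0) := by
      intro i
      apply finsum_eq_sum_of_support_subset
      intro j hj
      simp only [Function.mem_support, ne_eq] at hj
      by_contra h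
      simp only [coe_range, Set.mem_Iio, not_lt] at h
      exact hj (key i j (by omega) (by omega))
    rw [finsum_congr inner, finsum_eq_sum_of_support_subset _ (s := range (K + 1)) ?_]
    · rw [Finset.sum_range_succ']
      have h0 : (∑ j ∈ range (K + 1),
          if 1 ≤ 0 ∧ 1 ≤ j ∧ 1 ≤ 0 + j - a then
            ((0 + j - a : ℕ) : ℚ) • (X 0 * X j * pderiv (0 + j - a) f)
          else 0) = 0 := by
        apply Finset.sum_eq_zero; intro j _; simp
      rw [h0, add_zero, AS]
      apply Finset.sum_congr rfl
      intro i _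
      rw [Finset.sum_range_succ']
      have h0' : (if 1 ≤ i + 1 ∧ 1 ≤ 0 ∧ 1 ≤ (i + 1) + 0 - a then
            (((i + 1) + 0 - a : ℕ) : ℚ) • (X (i + 1) * X 0 * pderiv ((i + 1) + 0 - a) f)
          else 0) = 0 := by simp
      rw [h0', add_zero]
      apply Finset.sum_congr rfl
      intro j _
      have hc : (1 ≤ i + 1 ∧ 1 ≤ j + 1 ∧ 1 ≤ (i + 1) + (j + 1) - a) := by omega
      rw [if_pos hc]
      have : (i + 1) + (j + 1) - a = i + j + (2 - a) := by omega
      rw [this]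
    · intro i hi
      simp only [Function.mem_support, ne_eq] at hi
      by_contra h
      simp only [coe_range, Set.mem_Iio, not_lt] at h
      apply hi
      apply Finset.sum_eq_zero
      intro j _
      by_cases hj : 1 ≤ j
      · exact key i j (by omega) hj
      · have : ¬ (1 ≤ i ∧ 1 ≤ j ∧ 1 ≤ i + j - a) := by omega
        rw [if_neg this]
  have hB : (∑ᶠ i : ℕ, ∑ᶠ j : ℕ,
      ((i : ℚ) * (j : ℚ)) • (X (i + j + a) * pderiv i (pderiv j f))) = BS a K f := by
    have inner : ∀ i : ℕ, (∑ᶠ j : ℕ,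
        ((i : ℚ) * (j : ℚ)) • (X (i + j + a) * pderiv i (pderiv j f))) =
        ∑ j ∈ range K, ((i : ℚ) * (j : ℚ)) • (X (i + j + a) * pderiv i (pderiv j f)) := by
      intro i
      apply finsum_eq_sum_of_support_subset
      intro j hj
      simp only [Function.mem_support, ne_eq] at hj
      by_contra h
      simp only [coe_range, Set.mem_Iio, not_lt] at h
      exact hj (by rw [hb j h, map_zero, mul_zero, smul_zero])
    rw [finsum_congr inner, BS, finsum_eq_sum_of_support_subset _ (s := range K) ?_]
    intro i hi
    simp only [Function.mem_support, ne_eq] at hi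
    by_contra h
    simp only [coe_range, Set.mem_Iio, not_lt] at h
    apply hi
    apply Finset.sum_eq_zero
    intro j _
    rw [pd_comm, hb i h, map_zero, mul_zero, smul_zero]
  rw [M, hA, hB]

lemma pderiv_LS (R m : ℕ) (g : MvPolynomial ℕ ℚ) (hg : ∀ k, R ≤ k → pderiv k g = 0) :
    pderiv m (LS R g) =
      ((m - 1 : ℕ) : ℚ) • pderiv (m - 1) g +
        ∑ k ∈ range R, (k : ℚ) • (X (k + 1) * pderiv m (pderiv k g)) := by
  rw [LS, map_sum]
  have step : ∀ k : ℕ, pderiv m ((k : ℚ) • (X (k + 1) * pderiv k g)) =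
      (if k + 1 = m then (k : ℚ) • pderiv k g else 0) +
        (k : ℚ) • (X (k + 1) * pderiv m (pderiv k g)) := by
    intro k
    rw [Derivation.map_smul, pderiv_mul, pderiv_X, Pi.single_apply, smul_add]
    congr 1
    split_ifs with h <;> simp
  rw [Finset.sum_congr rfl (fun k _ => step k), Finset.sum_add_distrib]
  congr 1
  rcases Nat.eq_zero_or_pos m with rfl | hm
  · rw [Finset.sum_eq_zero (fun k _ => by simp)]
    simp
  · obtain ⟨m', rfl⟩ : ∃ m', m = m' + 1 := ⟨m - 1, by omega⟩
    have : ∀ k ∈ range R, (if k + 1 = m' + 1 then (k : ℚ) • pderiv k g else 0) =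
        (if k = m' then (k : ℚ) • pderiv k g else 0) := by
      intro k _; congr 1; simp [Nat.succ_inj]
    rw [Finset.sum_congr rfl this, Finset.sum_ite_eq']
    simp only [Nat.add_sub_cancel, Finset.mem_range]
    split_ifs with h
    · rfl
    · rw [hg m' (by omega), smul_zero]

lemma shiftSum (K : ℕ) (g : ℕ → MvPolynomial ℕ ℚ) (h0 : g 0 = 0) (hK : g K = 0) :
    ∑ i ∈ range K, g (i + 1) = ∑ i ∈ range K, g i := by
  have := Finset.sum_range_succ' g K
  rw [h0, add_zero] at this
  rw [← this, Finset.sum_range_succ, hK, add_zero]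

lemma collapseSum (R m : ℕ) (g : ℕ → MvPolynomial ℕ ℚ) (hg : ∀ k, R ≤ k → g k = 0) :
    ∑ k ∈ range R, (if k + 1 = m then (k : ℚ) • g k else 0) = ((m - 1 : ℕ) : ℚ) • g (m - 1) := by
  rcases Nat.eq_zero_or_pos m with rfl | hm
  · rw [Finset.sum_eq_zero (fun k _ => by simp)]; simp
  · obtain ⟨m', rfl⟩ : ∃ m', m = m' + 1 := ⟨m - 1, by omega⟩
    have : ∀ k ∈ range R, (if k + 1 = m' + 1 then (k : ℚ) • g k else 0) =
        (if k = m' then (k : ℚ) • g k else 0) := by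
      intro k _; congr 1; simp [Nat.succ_inj]
    rw [Finset.sum_congr rfl this, Finset.sum_ite_eq']
    simp only [Nat.add_sub_cancel, Finset.mem_range]
    split_ifs with h
    · rfl
    · rw [hg m' (by omega), smul_zero]

lemma pderiv2_LS (R i j : ℕ) (f : MvPolynomial ℕ ℚ) (hbR : ∀ k, R ≤ k → pderiv k f = 0) :
    pderiv i (pderiv j (LS R f)) =
      ((j - 1 : ℕ) : ℚ) • pderiv i (pderiv (j - 1) f) +
      ((i - 1 : ℕ) : ℚ) • pderiv j (pderiv (i - 1) f) +
        ∑ k ∈ range R, (k : ℚ) • (X (k + 1) * pderiv i (pderiv j (pderiv k f))) := by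
  rw [pderiv_LS R j f hbR, map_add, Derivation.map_smul, map_sum]
  rw [add_assoc]
  congr 1
  rw [← collapseSum R i (fun k => pderiv j (pderiv k f))
    (fun k hk => by show pderiv j (pderiv k f) = 0; rw [hbR k hk, map_zero]),
    ← Finset.sum_add_distrib]
  apply Finset.sum_congr rfl; intro k _
  rw [Derivation.map_smul, pderiv_mul, pderiv_X, Pi.single_apply]
  split_ifs with h
  · rw [pd_comm i j (pderiv k f)]
    simp [smul_add]
  · simp [smul_add]

end Auxiliary

section CoreComputation

lemma lemA (N K R : ℕ) (f : MvPolynomial ℕ ℚ) (hb : ∀ k, N ≤ k → pderiv k f = 0)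
    (hNK : N ≤ K) (hKR : 2 * K + 2 ≤ R) :
    AS 0 K (LS R f) - LS R (AS 0 K f) = (2 : ℚ) • AS 1 K f := by
  have hbR : ∀ k, R ≤ k → pderiv k f = 0 := fun k hk => hb k (by omega)
  have hP : AS 0 K (LS R f) =
      (∑ i ∈ range K, ∑ j ∈ range K,
        (((i + j + 2 : ℕ) : ℚ) * ((i + j + 1 : ℕ) : ℚ)) •
          (X (i + 1) * X (j + 1) * pderiv (i + j + 1) f)) +
      ∑ i ∈ range K, ∑ j ∈ range K, ∑ k ∈ range R,
        (((i + j + 2 : ℕ) : ℚ) * (k : ℚ)) •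
          (X (i + 1) * X (j + 1) * (X (k + 1) * pderiv (i + j + 2) (pderiv k f))) := by
    rw [AS, ← Finset.sum_add_distrib]
    apply Finset.sum_congr rfl; intro i _
    rw [← Finset.sum_add_distrib]
    apply Finset.sum_congr rfl; intro j _
    rw [pderiv_LS R (i + j + (2 - 0)) f hbR]
    have h1 : i + j + (2 - 0) = i + j + 2 := rfl
    have h2 : i + j + 2 - 1 = i + j + 1 := by omega
    rw [h1, h2, mul_add, smul_add]
    congr 1
    · rw [mul_smul_comm, smul_smul]
    · rw [Finset.mul_sum, Finset.smul_sum]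
      apply Finset.sum_congr rfl; intro k _
      rw [mul_smul_comm, smul_smul]
  have hQ : LS R (AS 0 K f) =
      ((∑ i ∈ range K, ∑ j ∈ range K,
        (((i + 1 : ℕ) : ℚ) * ((i + j + 2 : ℕ) : ℚ)) •
          (X (i + 1 + 1) * (X (j + 1) * pderiv (i + j + 2) f))) +
      (∑ i ∈ range K, ∑ j ∈ range K,
        (((j + 1 : ℕ) : ℚ) * ((i + j + 2 : ℕ) : ℚ)) •
          (X (j + 1 + 1) * (X (i + 1) * pderiv (i + j + 2) f)))) +
      ∑ i ∈ range K, ∑ j ∈ range K, ∑ k ∈ range R,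
        ((k : ℚ) * ((i + j + 2 : ℕ) : ℚ)) •
          (X (k + 1) * (X (i + 1) * X (j + 1) * pderiv k (pderiv (i + j + 2) f))) := by
    have key : ∀ k i j : ℕ,
        (k : ℚ) • (X (k + 1) *
          (((i + j + 2 : ℕ) : ℚ) • pderiv k (X (i + 1) * X (j + 1) * pderiv (i + j + 2) f))) =
        ((if i + 1 = k then ((k : ℚ) * ((i + j + 2 : ℕ) : ℚ)) •
            (X (k + 1) * (X (j + 1) * pderiv (i + j + 2) f)) else 0) +
          (if j + 1 = k then ((k : ℚ) * ((i + j + 2 : ℕ) : ℚ)) •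
            (X (k + 1) * (X (i + 1) * pderiv (i + j + 2) f)) else 0)) +
          ((k : ℚ) * ((i + j + 2 : ℕ) : ℚ)) •
            (X (k + 1) * (X (i + 1) * X (j + 1) * pderiv k (pderiv (i + j + 2) f))) := by
      intro k i j
      rw [pderiv_mul, pderiv_mul, pderiv_X, pderiv_X, Pi.single_apply, Pi.single_apply]
      split_ifs with h1 h2 h2 <;> simp only [smul_eq_C_mul, C_mul] <;> ring
    calc LS R (AS 0 K f)
        = ∑ k ∈ range R, ∑ i ∈ range K, ∑ j ∈ range K,
            (k : ℚ) • (X (k + 1) *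
              (((i + j + 2 : ℕ) : ℚ) • pderiv k (X (i + 1) * X (j + 1) * pderiv (i + j + 2) f))) := by
          rw [LS]
          apply Finset.sum_congr rfl; intro k _
          rw [AS, map_sum, Finset.mul_sum, Finset.smul_sum]
          apply Finset.sum_congr rfl; intro i _
          rw [map_sum, Finset.mul_sum, Finset.smul_sum]
          apply Finset.sum_congr rfl; intro j _
          rw [Derivation.map_smul]
      _ = ∑ i ∈ range K, ∑ j ∈ range K, ∑ k ∈ range R,
            (k : ℚ) • (X (k + 1) *
              (((i + j + 2 : ℕ) : ℚ) • pderiv k (X (i + 1) * X (j + 1) * pderiv (i + j + 2) f))) := by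
          rw [Finset.sum_comm]
          apply Finset.sum_congr rfl; intro i _
          rw [Finset.sum_comm]
      _ = _ := by
          rw [← Finset.sum_add_distrib, ← Finset.sum_add_distrib]
          apply Finset.sum_congr rfl; intro i hi
          rw [← Finset.sum_add_distrib, ← Finset.sum_add_distrib]
          apply Finset.sum_congr rfl; intro j hj
          rw [Finset.sum_congr rfl (fun k _ => key k i j), Finset.sum_add_distrib,
            Finset.sum_add_distrib, Finset.sum_ite_eq, Finset.sum_ite_eq]
          simp only [Finset.mem_range] at hi hj ⊢
          rw [if_pos (by omega), if_pos (by omega)]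
  have hQ1 : (∑ i ∈ range K, ∑ j ∈ range K,
        (((i + 1 : ℕ) : ℚ) * ((i + j + 2 : ℕ) : ℚ)) •
          (X (i + 1 + 1) * (X (j + 1) * pderiv (i + j + 2) f))) =
      ∑ i ∈ range K, ∑ j ∈ range K,
        ((i : ℚ) * ((i + j + 1 : ℕ) : ℚ)) •
          (X (i + 1) * (X (j + 1) * pderiv (i + j + 1) f)) := by
    rw [Finset.sum_comm]; nth_rewrite 2 [Finset.sum_comm]
    apply Finset.sum_congr rfl; intro j _
    have := shiftSum K (fun i => ((i : ℚ) * ((i + j + 1 : ℕ) : ℚ)) •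
          (X (i + 1) * (X (j + 1) * pderiv (i + j + 1) f))) (by simp)
        (by simp [hb (K + j + 1) (by omega)])
    rw [← this]
    apply Finset.sum_congr rfl; intro i _
    have h1 : i + 1 + j + 1 = i + j + 2 := by omega
    simp only [h1]
  have hQ2 : (∑ i ∈ range K, ∑ j ∈ range K,
        (((j + 1 : ℕ) : ℚ) * ((i + j + 2 : ℕ) : ℚ)) •
          (X (j + 1 + 1) * (X (i + 1) * pderiv (i + j + 2) f))) =
      ∑ i ∈ range K, ∑ j ∈ range K,
        ((j : ℚ) * ((i + j + 1 : ℕ) : ℚ)) •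
          (X (j + 1) * (X (i + 1) * pderiv (i + j + 1) f)) := by
    apply Finset.sum_congr rfl; intro i _
    have := shiftSum K (fun j => ((j : ℚ) * ((i + j + 1 : ℕ) : ℚ)) •
          (X (j + 1) * (X (i + 1) * pderiv (i + j + 1) f))) (by simp)
        (by simp [hb (i + K + 1) (by omega)])
    rw [← this]
    apply Finset.sum_congr rfl; intro j _
    have h1 : i + (j + 1) + 1 = i + j + 2 := by omega
    simp only [h1]
  have hT : (∑ i ∈ range K, ∑ j ∈ range K, ∑ k ∈ range R,
        (((i + j + 2 : ℕ) : ℚ) * (k : ℚ)) •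
          (X (i + 1) * X (j + 1) * (X (k + 1) * pderiv (i + j + 2) (pderiv k f)))) =
      ∑ i ∈ range K, ∑ j ∈ range K, ∑ k ∈ range R,
        ((k : ℚ) * ((i + j + 2 : ℕ) : ℚ)) •
          (X (k + 1) * (X (i + 1) * X (j + 1) * pderiv k (pderiv (i + j + 2) f))) := by
    apply Finset.sum_congr rfl; intro i _
    apply Finset.sum_congr rfl; intro j _
    apply Finset.sum_congr rfl; intro k _
    rw [pd_comm k (i + j + 2)]
    simp only [smul_eq_C_mul, C_mul]; ring
  rw [hP, hQ, hQ1, hQ2, ← hT]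
  have cancel : ∀ A B C T : MvPolynomial ℕ ℚ, (A + T) - ((B + C) + T) = A - B - C := by
    intro A B C T; ring
  rw [cancel]
  rw [AS, Finset.smul_sum, ← Finset.sum_sub_distrib, ← Finset.sum_sub_distrib]
  apply Finset.sum_congr rfl; intro i _
  rw [Finset.smul_sum, ← Finset.sum_sub_distrib, ← Finset.sum_sub_distrib]
  apply Finset.sum_congr rfl; intro j _
  have h21 : (2 : ℕ) - 1 = 1 := rfl
  rw [h21]
  have hv : X (j + 1) * (X (i + 1) * pderiv (i + j + 1) f)
      = X (i + 1) * X (j + 1) * pderiv (i + j + 1) f := by ring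
  have hv2 : X (i + 1) * (X (j + 1) * pderiv (i + j + 1) f)
      = X (i + 1) * X (j + 1) * pderiv (i + j + 1) f := by ring
  rw [hv, hv2, smul_smul, ← sub_smul, ← sub_smul]
  congr 1
  push_cast
  ring

lemma lemB (N K R : ℕ) (f : MvPolynomial ℕ ℚ) (hb : ∀ k, N ≤ k → pderiv k f = 0)
    (hNK : N + 1 ≤ K) (hKR : 2 * K + 2 ≤ R) :
    BS 0 K (LS R f) - LS R (BS 0 K f) = (2 : ℚ) • BS 1 K f := by
  have hbR : ∀ k, R ≤ k → pderiv k f = 0 := fun k hk => hb k (by omega)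
  have hU : BS 0 K (LS R f) =
      ((∑ i ∈ range K, ∑ j ∈ range K,
        ((i : ℚ) * (j : ℚ) * ((j - 1 : ℕ) : ℚ)) • (X (i + j + 0) * pderiv i (pderiv (j - 1) f))) +
      (∑ i ∈ range K, ∑ j ∈ range K,
        ((i : ℚ) * (j : ℚ) * ((i - 1 : ℕ) : ℚ)) • (X (i + j + 0) * pderiv j (pderiv (i - 1) f)))) +
      ∑ i ∈ range K, ∑ j ∈ range K, ∑ k ∈ range R,
        ((i : ℚ) * (j : ℚ) * (k : ℚ)) •
          (X (i + j + 0) * (X (k + 1) * pderiv i (pderiv j (pderiv k f)))) := by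
    rw [BS, ← Finset.sum_add_distrib, ← Finset.sum_add_distrib]
    apply Finset.sum_congr rfl; intro i _
    rw [← Finset.sum_add_distrib, ← Finset.sum_add_distrib]
    apply Finset.sum_congr rfl; intro j _
    rw [pderiv2_LS R i j f hbR, mul_add, mul_add, smul_add, smul_add]
    congr 1
    · congr 1
      · rw [mul_smul_comm, smul_smul]
      · rw [mul_smul_comm, smul_smul]
    · rw [Finset.mul_sum, Finset.smul_sum]
      apply Finset.sum_congr rfl; intro k _
      rw [mul_smul_comm, smul_smul]
  have hV : LS R (BS 0 K f) =
      (∑ i ∈ range K, ∑ j ∈ range K,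
        (((i + j : ℕ) : ℚ) * ((i : ℚ) * (j : ℚ))) • (X (i + j + 1) * pderiv i (pderiv j f))) +
      ∑ i ∈ range K, ∑ j ∈ range K, ∑ k ∈ range R,
        ((k : ℚ) * ((i : ℚ) * (j : ℚ))) •
          (X (k + 1) * (X (i + j + 0) * pderiv k (pderiv i (pderiv j f)))) := by
    have key : ∀ k i j : ℕ,
        (k : ℚ) • (X (k + 1) *
          (((i : ℚ) * (j : ℚ)) • pderiv k (X (i + j + 0) * pderiv i (pderiv j f)))) =
        (if i + j = k then ((k : ℚ) * ((i : ℚ) * (j : ℚ))) •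
            (X (k + 1) * pderiv i (pderiv j f)) else 0) +
          ((k : ℚ) * ((i : ℚ) * (j : ℚ))) •
            (X (k + 1) * (X (i + j + 0) * pderiv k (pderiv i (pderiv j f)))) := by
      intro k i j
      rw [pderiv_mul, pderiv_X, Pi.single_apply]
      have : (i + j + 0 = k) ↔ (i + j = k) := by omega
      rw [if_congr this rfl rfl]
      split_ifs with h1 <;> simp only [smul_eq_C_mul, C_mul] <;> ring
    calc LS R (BS 0 K f)
        = ∑ k ∈ range R, ∑ i ∈ range K, ∑ j ∈ range K,
            (k : ℚ) • (X (k + 1) *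
              (((i : ℚ) * (j : ℚ)) • pderiv k (X (i + j + 0) * pderiv i (pderiv j f)))) := by
          rw [LS]
          apply Finset.sum_congr rfl; intro k _
          rw [BS, map_sum, Finset.mul_sum, Finset.smul_sum]
          apply Finset.sum_congr rfl; intro i _
          rw [map_sum, Finset.mul_sum, Finset.smul_sum]
          apply Finset.sum_congr rfl; intro j _
          rw [Derivation.map_smul]
      _ = ∑ i ∈ range K, ∑ j ∈ range K, ∑ k ∈ range R,
            (k : ℚ) • (X (k + 1) *
              (((i : ℚ) * (j : ℚ)) • pderiv k (X (i + j + 0) * pderiv i (pderiv j f)))) := by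
          rw [Finset.sum_comm]
          apply Finset.sum_congr rfl; intro i _
          rw [Finset.sum_comm]
      _ = _ := by
          rw [← Finset.sum_add_distrib]
          apply Finset.sum_congr rfl; intro i hi
          rw [← Finset.sum_add_distrib]
          apply Finset.sum_congr rfl; intro j hj
          rw [Finset.sum_congr rfl (fun k _ => key k i j), Finset.sum_add_distrib,
            Finset.sum_ite_eq]
          simp only [Finset.mem_range] at hi hj ⊢
          rw [if_pos (by omega)]
  have hU1 : (∑ i ∈ range K, ∑ j ∈ range K,
        ((i : ℚ) * (j : ℚ) * ((j - 1 : ℕ) : ℚ)) • (X (i + j + 0) * pderiv i (pderiv (j - 1) f))) =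
      ∑ i ∈ range K, ∑ j ∈ range K,
        ((i : ℚ) * ((j + 1 : ℕ) : ℚ) * (j : ℚ)) • (X (i + j + 1) * pderiv i (pderiv j f)) := by
    apply Finset.sum_congr rfl; intro i _
    have := shiftSum K (fun j => ((i : ℚ) * ((j : ℕ) : ℚ) * (((j : ℕ) - 1 : ℕ) : ℚ)) •
          (X (i + j + 0) * pderiv i (pderiv (j - 1) f))) (by simp)
        (by rw [hb (K - 1) (by omega), map_zero, mul_zero, smul_zero])
    rw [← this]
    apply Finset.sum_congr rfl; intro j _
    have h1 : j + 1 - 1 = j := by omega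
    have h2 : i + (j + 1) + 0 = i + j + 1 := by omega
    simp only [h1, h2]
  have hU2 : (∑ i ∈ range K, ∑ j ∈ range K,
        ((i : ℚ) * (j : ℚ) * ((i - 1 : ℕ) : ℚ)) • (X (i + j + 0) * pderiv j (pderiv (i - 1) f))) =
      ∑ i ∈ range K, ∑ j ∈ range K,
        (((i + 1 : ℕ) : ℚ) * (j : ℚ) * (i : ℚ)) • (X (i + j + 1) * pderiv i (pderiv j f)) := by
    rw [Finset.sum_comm]; nth_rewrite 2 [Finset.sum_comm]
    apply Finset.sum_congr rfl; intro j _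
    have := shiftSum K (fun i => (((i : ℕ) : ℚ) * ((j : ℕ) : ℚ) * (((i : ℕ) - 1 : ℕ) : ℚ)) •
          (X (i + j + 0) * pderiv j (pderiv (i - 1) f))) (by simp)
        (by rw [hb (K - 1) (by omega), map_zero, mul_zero, smul_zero])
    rw [← this]
    apply Finset.sum_congr rfl; intro i _
    have h1 : i + 1 - 1 = i := by omega
    have h2 : i + 1 + j + 0 = i + j + 1 := by omega
    simp only [h1, h2]
    rw [pd_comm j i]
  have hT : (∑ i ∈ range K, ∑ j ∈ range K, ∑ k ∈ range R,
        ((i : ℚ) * (j : ℚ) * (k : ℚ)) •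
          (X (i + j + 0) * (X (k + 1) * pderiv i (pderiv j (pderiv k f))))) =
      ∑ i ∈ range K, ∑ j ∈ range K, ∑ k ∈ range R,
        ((k : ℚ) * ((i : ℚ) * (j : ℚ))) •
          (X (k + 1) * (X (i + j + 0) * pderiv k (pderiv i (pderiv j f)))) := by
    apply Finset.sum_congr rfl; intro i _
    apply Finset.sum_congr rfl; intro j _
    apply Finset.sum_congr rfl; intro k _
    rw [pd_comm3 k i j]
    simp only [smul_eq_C_mul, C_mul]; ring
  rw [hU, hV, hU1, hU2, ← hT]
  have cancel : ∀ A B C T : MvPolynomial ℕ ℚ, (A + B) + T - (C + T) = A + B - C := by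
    intro A B C T; ring
  rw [cancel]
  rw [BS, Finset.smul_sum, ← Finset.sum_add_distrib, ← Finset.sum_sub_distrib]
  apply Finset.sum_congr rfl; intro i _
  rw [Finset.smul_sum, ← Finset.sum_add_distrib, ← Finset.sum_sub_distrib]
  apply Finset.sum_congr rfl; intro j _
  rw [smul_smul, ← add_smul, ← sub_smul]
  congr 1
  push_cast
  ring

end CoreComputation

section Assembly

lemma LS_smul_add (R : ℕ) (c : ℚ) (p q : MvPolynomial ℕ ℚ) :
    LS R (c • (p + q)) = c • (LS R p + LS R q) := by
  rw [LS, LS, LS, smul_add, ← Finset.sum_add_distrib, Finset.smul_sum]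
  apply Finset.sum_congr rfl; intro k _
  rw [map_add, Derivation.map_smul, Derivation.map_smul]
  simp only [smul_eq_C_mul, C_mul]
  ring

lemma boundLS (N K R : ℕ) (f : MvPolynomial ℕ ℚ) (hb : ∀ k, N ≤ k → pderiv k f = 0)
    (hNK : N + 1 ≤ K) (hNR : N ≤ R) :
    ∀ m, K ≤ m → pderiv m (LS R f) = 0 := by
  intro m hm
  rw [pderiv_LS R m f (fun k hk => hb k (by omega))]
  rw [hb (m - 1) (by omega), smul_zero, zero_add]
  apply Finset.sum_eq_zero; intro k _
  rw [pd_comm m k, hb m (by omega), map_zero]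
  simp

lemma boundAS (N K : ℕ) (f : MvPolynomial ℕ ℚ) (hb : ∀ k, N ≤ k → pderiv k f = 0)
    (hNK : N ≤ K) : ∀ m, 2 * K + 2 ≤ m → pderiv m (AS 0 K f) = 0 := by
  intro m hm
  rw [AS, map_sum]
  apply Finset.sum_eq_zero; intro i hi
  rw [map_sum]
  apply Finset.sum_eq_zero; intro j hj
  simp only [Finset.mem_range] at hi hj
  rw [Derivation.map_smul, pderiv_mul, pderiv_mul,
    pderiv_X_of_ne (by omega), pderiv_X_of_ne (by omega),
    pd_comm m _, hb m (by omega), map_zero]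
  simp

lemma boundBS (N K : ℕ) (f : MvPolynomial ℕ ℚ) (hb : ∀ k, N ≤ k → pderiv k f = 0)
    (hNK : N ≤ K) : ∀ m, 2 * K + 2 ≤ m → pderiv m (BS 0 K f) = 0 := by
  intro m hm
  rw [BS, map_sum]
  apply Finset.sum_eq_zero; intro i hi
  rw [map_sum]
  apply Finset.sum_eq_zero; intro j hj
  simp only [Finset.mem_range] at hi hj
  rw [Derivation.map_smul, pderiv_mul, pderiv_X_of_ne (by omega),
    pd_comm3 m i j, hb m (by omega), map_zero, map_zero]
  simp

end Assembly

/-- [M₀, Λ₁] = 2 M₁ as operators on ℚ[q₁, q₂, …]. -/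
theorem commutator_M0_Lam1 :
    ∀ f : MvPolynomial ℕ ℚ, M 0 (Lam1 f) - Lam1 (M 0 f) = 2 • M 1 f := by
  intro f
  obtain ⟨N, hb⟩ : ∃ N, ∀ k, N ≤ k → pderiv k f = 0 := by
    refine ⟨f.vars.sup id + 1, fun k hk => ?_⟩
    apply pderiv_eq_zero_of_notMem_vars
    intro hmem
    have := Finset.le_sup (f := id) hmem
    simp only [id] at this
    omega
  set K := N + 1 with hK
  set R := 2 * K + 2 with hR
  have hbK : ∀ k, K ≤ k → pderiv k f = 0 := fun k hk => hb k (by omega)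
  have hbR : ∀ k, R ≤ k → pderiv k f = 0 := fun k hk => hb k (by omega)
  have hLamBound : ∀ m, K ≤ m → pderiv m (LS R f) = 0 :=
    boundLS N K R f hb (by omega) (by omega)
  have hM0Lam : M 0 (Lam1 f) = (1 / 2 : ℚ) • (AS 0 K (LS R f) + BS 0 K (LS R f)) := by
    rw [Lam1_eq R f hbR]
    exact M_eq 0 K (by omega) _ hLamBound
  have hM0f : M 0 f = (1 / 2 : ℚ) • (AS 0 K f + BS 0 K f) := M_eq 0 K (by omega) f hbK
  have hM1f : M 1 f = (1 / 2 : ℚ) • (AS 1 K f + BS 1 K f) := M_eq 1 K (by omega) f hbK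
  have hMBound : ∀ m, R ≤ m → pderiv m (M 0 f) = 0 := by
    intro m hm
    rw [hM0f, Derivation.map_smul, map_add, boundAS N K f hb (by omega) m (by omega),
      boundBS N K f hb (by omega) m (by omega), add_zero, smul_zero]
  have hLamM0 : Lam1 (M 0 f) = LS R (M 0 f) := Lam1_eq R _ hMBound
  have hA := lemA N K R f hb (by omega) (by omega)
  have hB := lemB N K R f hb (by omega) (by omega)
  rw [hM0Lam, hLamM0, hM0f, LS_smul_add, hM1f]
  have expand : (1 / 2 : ℚ) • (AS 0 K (LS R f) + BS 0 K (LS R f)) -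
      (1 / 2 : ℚ) • (LS R (AS 0 K f) + LS R (BS 0 K f)) =
      (1 / 2 : ℚ) • ((AS 0 K (LS R f) - LS R (AS 0 K f)) +
        (BS 0 K (LS R f) - LS R (BS 0 K f))) := by
    module
  rw [expand, hA, hB, ← Nat.cast_smul_eq_nsmul ℚ 2, smul_smul, smul_add, smul_smul, smul_smul]
  norm_num
end

section
/- With M_1, M_2 the cut-and-join type operators M_1 = (1/2) Σ_{i+j≥1} q_i q_j (i+j-1) ∂/∂q_{i+j-1} + (1/2) Σ_{i,j≥1} q_{i+j+1} i j ∂²/(∂q_i ∂q_j) and M_2 = (1/2) Σ_{i+j≥2} q_i q_j (i+j-2) ∂/∂q_{i+j-2} + (1/2) Σ_{i,j≥1} q_{i+j+2} i j ∂²/(∂q_i ∂q_j), and Λ_1 = Σ_{i≥2} (i-1) q_i ∂/∂q_{i-1}, one has [M_1, Λ_1] = M_2. -/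
open MvPolynomial

namespace CutJoin

open Finset

/-! ### Infrastructure -/

lemma pderiv_comm' (i j : ℕ) (f : MvPolynomial ℕ ℚ) :
    pderiv i (pderiv j f) = pderiv j (pderiv i f) := by
  induction f using MvPolynomial.induction_on' with
  | monomial s a =>
    rcases eq_or_ne i j with rfl | hij
    · rfl
    · simp only [pderiv_monomial]
      rw [tsub_right_comm]
      congr 1
      rw [Finsupp.tsub_apply, Finsupp.tsub_apply,
        Finsupp.single_eq_of_ne' hij, Finsupp.single_eq_of_ne' hij.symm]
      simp
      ring
  | add p q hp hq => simp [map_add, hp, hq]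

lemma finsum_eq_range {M : Type*} [AddCommMonoid M] (g : ℕ → M) (B : ℕ)
    (h : ∀ k, B ≤ k → g k = 0) : ∑ᶠ k, g k = ∑ k ∈ Finset.range B, g k := by
  apply finsum_eq_sum_of_support_subset
  intro k hk
  simp only [Function.mem_support] at hk
  simp only [Finset.coe_range, Set.mem_Iio]
  by_contra hc
  exact hk (h k (le_of_not_gt hc))

lemma exists_bound (f : MvPolynomial ℕ ℚ) :
    ∃ N, 1 ≤ N ∧ ∀ k, N ≤ k → pderiv k f = 0 := by
  refine ⟨f.vars.sup id + 1, by omega, fun k hk => ?_⟩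
  apply pderiv_eq_zero_of_notMem_vars
  intro hmem
  have := Finset.le_sup (f := id) hmem
  simp only [id] at this
  omega

lemma sum_shift {M : Type*} [AddCommGroup M] (F : ℕ → M) (B : ℕ)
    (h0 : F 0 = 0) (hB : F B = 0) :
    ∑ i ∈ range B, F (i + 1) = ∑ i ∈ range B, F i := by
  have h1 := Finset.sum_range_succ' F B
  rw [Finset.sum_range_succ] at h1
  rw [h0, hB, add_zero, add_zero] at h1
  exact h1.symm

/-! ### Finite forms of the operators -/

noncomputable def SA (a B : ℕ) (g : MvPolynomial ℕ ℚ) : MvPolynomial ℕ ℚ :=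
  ∑ i ∈ range B, ∑ j ∈ range B,
    if 1 ≤ i ∧ 1 ≤ j ∧ 1 ≤ i + j - a then
      ((i + j - a : ℕ) : ℚ) • (X i * X j * pderiv (i + j - a) g)
    else 0

noncomputable def SB (a B : ℕ) (g : MvPolynomial ℕ ℚ) : MvPolynomial ℕ ℚ :=
  ∑ i ∈ range B, ∑ j ∈ range B,
    ((i : ℚ) * (j : ℚ)) • (X (i + j + a) * pderiv i (pderiv j g))

lemma M_eq (a N B : ℕ) (g : MvPolynomial ℕ ℚ)
    (hN : ∀ k, N ≤ k → pderiv k g = 0) (hB : N + a ≤ B) :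
    M a g = (1 / 2 : ℚ) • (SA a B g + SB a B g) := by
  have hAz : ∀ i j : ℕ, B ≤ i ∨ B ≤ j →
      (if 1 ≤ i ∧ 1 ≤ j ∧ 1 ≤ i + j - a then
        ((i + j - a : ℕ) : ℚ) • (X i * X j * pderiv (i + j - a) g)
      else 0) = 0 := by
    intro i j hij
    split_ifs with h
    · rw [hN (i + j - a) (by omega)]
      simp
    · rfl
  have hBz : ∀ i j : ℕ, B ≤ i ∨ B ≤ j →
      ((i : ℚ) * (j : ℚ)) • ((X (i + j + a) : MvPolynomial ℕ ℚ) * pderiv i (pderiv j g)) = 0 := by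
    intro i j hij
    rcases hij with hi | hj
    · rw [pderiv_comm', hN i (by omega)]
      simp
    · rw [hN j (by omega)]
      simp
  have eA : (∑ᶠ i : ℕ, ∑ᶠ j : ℕ,
      if 1 ≤ i ∧ 1 ≤ j ∧ 1 ≤ i + j - a then
        ((i + j - a : ℕ) : ℚ) • (X i * X j * pderiv (i + j - a) g)
      else 0) = SA a B g := by
    rw [finsum_eq_range _ B (fun i hi => by
      rw [finsum_eq_range _ B (fun j hj => hAz i j (Or.inl hi))]
      exact Finset.sum_eq_zero fun j _ => hAz i j (Or.inl hi))]
    exact Finset.sum_congr rfl fun i _ =>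
      finsum_eq_range _ B (fun j hj => hAz i j (Or.inr hj))
  have eB : (∑ᶠ i : ℕ, ∑ᶠ j : ℕ,
      ((i : ℚ) * (j : ℚ)) • (X (i + j + a) * pderiv i (pderiv j g))) = SB a B g := by
    rw [finsum_eq_range _ B (fun i hi => by
      rw [finsum_eq_range _ B (fun j hj => hBz i j (Or.inl hi))]
      exact Finset.sum_eq_zero fun j _ => hBz i j (Or.inl hi))]
    exact Finset.sum_congr rfl fun i _ =>
      finsum_eq_range _ B (fun j hj => hBz i j (Or.inr hj))
  rw [M, eA, eB]

lemma Lam1_eq (N B : ℕ) (g : MvPolynomial ℕ ℚ)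
    (hN : ∀ k, N ≤ k → pderiv k g = 0) (hB : N ≤ B) :
    Lam1 g = ∑ k ∈ range B, (k : ℚ) • (X (k + 1) * pderiv k g) := by
  apply finsum_eq_range
  intro k hk
  rw [hN k (by omega)]
  simp

lemma bnd_Lam1 (N : ℕ) (g : MvPolynomial ℕ ℚ)
    (hN : ∀ k, N ≤ k → pderiv k g = 0) :
    ∀ m, N + 1 ≤ m → pderiv m (Lam1 g) = 0 := by
  intro m hm
  rw [Lam1_eq N N g hN le_rfl, map_sum]
  refine Finset.sum_eq_zero fun k hk => ?_
  rw [Finset.mem_range] at hk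
  rw [Derivation.map_smul, pderiv_mul, pderiv_X_of_ne (by omega : k + 1 ≠ m),
    pderiv_comm', hN m (by omega)]
  simp

lemma bnd_M1 (N : ℕ) (g : MvPolynomial ℕ ℚ)
    (hN : ∀ k, N ≤ k → pderiv k g = 0) :
    ∀ m, 2 * N + 1 ≤ m → pderiv m (M 1 g) = 0 := by
  intro m hm
  rw [M_eq 1 N (N + 1) g hN (by omega), Derivation.map_smul, map_add]
  have hA : pderiv m (SA 1 (N + 1) g) = 0 := by
    rw [SA, map_sum]
    refine Finset.sum_eq_zero fun i hi => ?_
    rw [map_sum]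
    refine Finset.sum_eq_zero fun j hj => ?_
    rw [mem_range] at hi hj
    split_ifs with h
    · rw [Derivation.map_smul, pderiv_mul, pderiv_mul,
        pderiv_X_of_ne (by omega : i ≠ m), pderiv_X_of_ne (by omega : j ≠ m),
        pderiv_comm' m, hN m (by omega)]
      simp
    · simp
  have hB : pderiv m (SB 1 (N + 1) g) = 0 := by
    rw [SB, map_sum]
    refine Finset.sum_eq_zero fun i hi => ?_
    rw [map_sum]
    refine Finset.sum_eq_zero fun j hj => ?_
    by_cases h : pderiv i (pderiv j g) = 0
    · simp [h]
    · have hii : i < N := by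
        by_contra hc
        exact h (by rw [pderiv_comm', hN i (by omega)]; simp)
      have hjj : j < N := by
        by_contra hc
        exact h (by rw [hN j (by omega)]; simp)
      rw [Derivation.map_smul, pderiv_mul,
        pderiv_X_of_ne (by omega : i + j + 1 ≠ m),
        pderiv_comm' m i, pderiv_comm' m j, hN m (by omega)]
      simp
  rw [hA, hB]
  simp

/-! ### Derivatives of `Lam1 f` -/

lemma DL (N B : ℕ) (f : MvPolynomial ℕ ℚ)
    (hf : ∀ k, N ≤ k → pderiv k f = 0) (hB : N ≤ B) (m : ℕ) :
    pderiv m (Lam1 f) = ((m - 1 : ℕ) : ℚ) • pderiv (m - 1) f +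
      ∑ k ∈ range B, (k : ℚ) • (X (k + 1) * pderiv m (pderiv k f)) := by
  rw [Lam1_eq N B f hf hB, map_sum]
  have step : ∀ k ∈ range B, pderiv m ((k : ℚ) • (X (k + 1) * pderiv k f)) =
      (if k = m - 1 ∧ 1 ≤ m then (k : ℚ) • pderiv k f else 0) +
      (k : ℚ) • (X (k + 1) * pderiv m (pderiv k f)) := by
    intro k _
    rw [Derivation.map_smul, pderiv_mul]
    by_cases hk : m = k + 1
    · subst hk
      rw [pderiv_X_self, if_pos (by omega)]
      simp [smul_add]
    · rw [pderiv_X_of_ne (by omega : k + 1 ≠ m), if_neg (by omega)]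
      simp [smul_add]
  rw [Finset.sum_congr rfl step, Finset.sum_add_distrib]
  congr 1
  by_cases hm : 1 ≤ m
  · simp only [hm, and_true]
    rw [Finset.sum_ite_eq' (range B) (m - 1) (fun k => (k : ℚ) • pderiv k f)]
    by_cases hmB : m - 1 ∈ range B
    · rw [if_pos hmB]
    · rw [if_neg hmB, hf (m - 1) (by rw [mem_range] at hmB; omega)]
      simp
  · have hm0 : m = 0 := by omega
    subst hm0
    simp

lemma DDL (N B : ℕ) (f : MvPolynomial ℕ ℚ)
    (hf : ∀ k, N ≤ k → pderiv k f = 0) (hB : N ≤ B) (i j : ℕ) :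
    pderiv i (pderiv j (Lam1 f)) =
      ((j - 1 : ℕ) : ℚ) • pderiv i (pderiv (j - 1) f) +
      ((i - 1 : ℕ) : ℚ) • pderiv j (pderiv (i - 1) f) +
      ∑ k ∈ range B, (k : ℚ) • (X (k + 1) * pderiv i (pderiv j (pderiv k f))) := by
  rw [DL N B f hf hB j, map_add, Derivation.map_smul, map_sum]
  have key : (∑ k ∈ range B, pderiv i ((k : ℚ) • (X (k + 1) * pderiv j (pderiv k f)))) =
      ((i - 1 : ℕ) : ℚ) • pderiv j (pderiv (i - 1) f) +
      ∑ k ∈ range B, (k : ℚ) • (X (k + 1) * pderiv i (pderiv j (pderiv k f))) := by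
    have step : ∀ k ∈ range B, pderiv i ((k : ℚ) • (X (k + 1) * pderiv j (pderiv k f))) =
        (if k = i - 1 ∧ 1 ≤ i then (k : ℚ) • pderiv j (pderiv k f) else 0) +
        (k : ℚ) • (X (k + 1) * pderiv i (pderiv j (pderiv k f))) := by
      intro k _
      rw [Derivation.map_smul, pderiv_mul]
      by_cases hk : i = k + 1
      · subst hk
        rw [pderiv_X_self, if_pos (by omega)]
        simp [smul_add]
      · rw [pderiv_X_of_ne (by omega : k + 1 ≠ i), if_neg (by omega)]
        simp [smul_add]
    rw [Finset.sum_congr rfl step, Finset.sum_add_distrib]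
    congr 1
    by_cases hi : 1 ≤ i
    · simp only [hi, and_true]
      rw [Finset.sum_ite_eq' (range B) (i - 1) (fun k => (k : ℚ) • pderiv j (pderiv k f))]
      by_cases hiB : i - 1 ∈ range B
      · rw [if_pos hiB]
      · rw [if_neg hiB, hf (i - 1) (by rw [mem_range] at hiB; omega)]
        simp
    · have hi0 : i = 0 := by omega
      subst hi0
      simp
  rw [key, ← add_assoc]


/-! ### The pieces of the computation -/

variable (B : ℕ) (f : MvPolynomial ℕ ℚ)

noncomputable def T1 : MvPolynomial ℕ ℚ :=
  ∑ i ∈ range B, ∑ j ∈ range B,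
    if 1 ≤ i ∧ 1 ≤ j ∧ 1 ≤ i + j - 1 then
      (((i + j - 1 : ℕ) : ℚ) * ((i + j - 2 : ℕ) : ℚ)) • (X i * X j * pderiv (i + j - 2) f)
    else 0

noncomputable def T2 : MvPolynomial ℕ ℚ :=
  ∑ i ∈ range B, ∑ j ∈ range B,
    if 1 ≤ i ∧ 1 ≤ j ∧ 1 ≤ i + j - 1 then
      ∑ k ∈ range B, (((i + j - 1 : ℕ) : ℚ) * (k : ℚ)) •
        (X i * X j * (X (k + 1) * pderiv (i + j - 1) (pderiv k f)))
    else 0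

noncomputable def T3a : MvPolynomial ℕ ℚ :=
  ∑ i ∈ range B, ∑ j ∈ range B,
    ((i : ℚ) * (j : ℚ) * ((j - 1 : ℕ) : ℚ)) • (X (i + j + 1) * pderiv i (pderiv (j - 1) f))

noncomputable def T3b : MvPolynomial ℕ ℚ :=
  ∑ i ∈ range B, ∑ j ∈ range B,
    ((i : ℚ) * (j : ℚ) * ((i - 1 : ℕ) : ℚ)) • (X (i + j + 1) * pderiv j (pderiv (i - 1) f))

noncomputable def T4 : MvPolynomial ℕ ℚ :=
  ∑ i ∈ range B, ∑ j ∈ range B, ∑ k ∈ range B,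
    ((i : ℚ) * (j : ℚ) * (k : ℚ)) •
      (X (i + j + 1) * (X (k + 1) * pderiv i (pderiv j (pderiv k f))))

noncomputable def T3a' : MvPolynomial ℕ ℚ :=
  ∑ i ∈ range B, ∑ j ∈ range B,
    ((i : ℚ) * ((j : ℚ) + 1) * (j : ℚ)) • (X (i + j + 2) * pderiv i (pderiv j f))

noncomputable def T3b' : MvPolynomial ℕ ℚ :=
  ∑ i ∈ range B, ∑ j ∈ range B,
    (((i : ℚ) + 1) * (j : ℚ) * (i : ℚ)) • (X (i + j + 2) * pderiv i (pderiv j f))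

noncomputable def G1' : MvPolynomial ℕ ℚ :=
  ∑ i ∈ range B, ∑ j ∈ range B,
    if 1 ≤ i ∧ 1 ≤ j ∧ 1 ≤ i + j - 1 then
      ((i : ℚ) * ((i + j - 1 : ℕ) : ℚ)) • (X (i + 1) * (X j * pderiv (i + j - 1) f))
    else 0

noncomputable def G2' : MvPolynomial ℕ ℚ :=
  ∑ i ∈ range B, ∑ j ∈ range B,
    if 1 ≤ i ∧ 1 ≤ j ∧ 1 ≤ i + j - 1 then
      ((j : ℚ) * ((i + j - 1 : ℕ) : ℚ)) • (X (j + 1) * (X i * pderiv (i + j - 1) f))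
    else 0

noncomputable def G1 : MvPolynomial ℕ ℚ :=
  ∑ i ∈ range B, ∑ j ∈ range B,
    if 2 ≤ i ∧ 1 ≤ j then
      (((i - 1 : ℕ) : ℚ) * ((i + j - 2 : ℕ) : ℚ)) • (X i * X j * pderiv (i + j - 2) f)
    else 0

noncomputable def G2 : MvPolynomial ℕ ℚ :=
  ∑ i ∈ range B, ∑ j ∈ range B,
    if 1 ≤ i ∧ 2 ≤ j then
      (((j - 1 : ℕ) : ℚ) * ((i + j - 2 : ℕ) : ℚ)) • (X i * X j * pderiv (i + j - 2) f)
    else 0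

noncomputable def G4 : MvPolynomial ℕ ℚ :=
  ∑ i ∈ range B, ∑ j ∈ range B,
    ((i : ℚ) * (j : ℚ) * ((i + j + 1 : ℕ) : ℚ)) • (X (i + j + 2) * pderiv i (pderiv j f))

/-! ### Expansion of `M 1 (Lam1 f)` -/

lemma SAL_eq (N : ℕ) (hf : ∀ k, N ≤ k → pderiv k f = 0) (hB : N ≤ B) :
    SA 1 B (Lam1 f) = T1 B f + T2 B f := by
  rw [SA, T1, T2, ← Finset.sum_add_distrib]
  refine Finset.sum_congr rfl fun i _ => ?_
  rw [← Finset.sum_add_distrib]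
  refine Finset.sum_congr rfl fun j _ => ?_
  by_cases h : 1 ≤ i ∧ 1 ≤ j ∧ 1 ≤ i + j - 1
  · simp only [if_pos h]
    rw [DL N B f hf hB (i + j - 1),
      show i + j - 1 - 1 = i + j - 2 by omega]
    rw [mul_add, mul_smul_comm, smul_add, smul_smul, Finset.mul_sum, Finset.smul_sum]
    congr 1
    refine Finset.sum_congr rfl fun k _ => ?_
    rw [mul_smul_comm, smul_smul]
  · simp [h]

lemma SBL_eq (N : ℕ) (hf : ∀ k, N ≤ k → pderiv k f = 0) (hB : N ≤ B) :
    SB 1 B (Lam1 f) = T3a B f + T3b B f + T4 B f := by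
  rw [SB, T3a, T3b, T4, ← Finset.sum_add_distrib, ← Finset.sum_add_distrib]
  refine Finset.sum_congr rfl fun i _ => ?_
  rw [← Finset.sum_add_distrib, ← Finset.sum_add_distrib]
  refine Finset.sum_congr rfl fun j _ => ?_
  rw [DDL N B f hf hB i j]
  rw [mul_add, mul_add, mul_smul_comm, mul_smul_comm, Finset.mul_sum,
    smul_add, smul_add, smul_smul, smul_smul, Finset.smul_sum]
  congr 1
  refine Finset.sum_congr rfl fun k _ => ?_
  rw [mul_smul_comm, smul_smul]


/-! ### Expansion of `Lam1 (M 1 f)` -/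

lemma LSA (N : ℕ) (hf : ∀ k, N ≤ k → pderiv k f = 0) :
    (∑ k ∈ range B, (k : ℚ) • (X (k + 1) * pderiv k (SA 1 B f)))
      = G1' B f + G2' B f + T2 B f := by
  calc (∑ k ∈ range B, (k : ℚ) • (X (k + 1) * pderiv k (SA 1 B f)))
      = ∑ k ∈ range B, ∑ i ∈ range B, ∑ j ∈ range B, (k : ℚ) •
          (X (k + 1) * pderiv k (if 1 ≤ i ∧ 1 ≤ j ∧ 1 ≤ i + j - 1 then
            ((i + j - 1 : ℕ) : ℚ) • (X i * X j * pderiv (i + j - 1) f) else 0)) := by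
        refine Finset.sum_congr rfl fun k _ => ?_
        rw [SA, map_sum, Finset.mul_sum, Finset.smul_sum]
        refine Finset.sum_congr rfl fun i _ => ?_
        rw [map_sum, Finset.mul_sum, Finset.smul_sum]
    _ = ∑ i ∈ range B, ∑ k ∈ range B, ∑ j ∈ range B, (k : ℚ) •
          (X (k + 1) * pderiv k (if 1 ≤ i ∧ 1 ≤ j ∧ 1 ≤ i + j - 1 then
            ((i + j - 1 : ℕ) : ℚ) • (X i * X j * pderiv (i + j - 1) f) else 0)) :=
        Finset.sum_comm
    _ = ∑ i ∈ range B, ∑ j ∈ range B, ∑ k ∈ range B, (k : ℚ) •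
          (X (k + 1) * pderiv k (if 1 ≤ i ∧ 1 ≤ j ∧ 1 ≤ i + j - 1 then
            ((i + j - 1 : ℕ) : ℚ) • (X i * X j * pderiv (i + j - 1) f) else 0)) :=
        Finset.sum_congr rfl fun i _ => Finset.sum_comm
    _ = ∑ i ∈ range B, ∑ j ∈ range B,
          ((if 1 ≤ i ∧ 1 ≤ j ∧ 1 ≤ i + j - 1 then
            ((i : ℚ) * ((i + j - 1 : ℕ) : ℚ)) • (X (i + 1) * (X j * pderiv (i + j - 1) f))
          else 0) +
          ((if 1 ≤ i ∧ 1 ≤ j ∧ 1 ≤ i + j - 1 then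
            ((j : ℚ) * ((i + j - 1 : ℕ) : ℚ)) • (X (j + 1) * (X i * pderiv (i + j - 1) f))
          else 0) +
          (if 1 ≤ i ∧ 1 ≤ j ∧ 1 ≤ i + j - 1 then
            ∑ k ∈ range B, (((i + j - 1 : ℕ) : ℚ) * (k : ℚ)) •
              (X i * X j * (X (k + 1) * pderiv (i + j - 1) (pderiv k f)))
          else 0))) := by
        refine Finset.sum_congr rfl fun i hi => Finset.sum_congr rfl fun j hj => ?_
        by_cases h : 1 ≤ i ∧ 1 ≤ j ∧ 1 ≤ i + j - 1
        · simp only [if_pos h]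
          have expand : ∀ k ∈ range B,
              (k : ℚ) • (X (k + 1) * pderiv k
                (((i + j - 1 : ℕ) : ℚ) • (X i * X j * pderiv (i + j - 1) f))) =
              (if i = k then
                ((i : ℚ) * ((i + j - 1 : ℕ) : ℚ)) • (X (i + 1) * (X j * pderiv (i + j - 1) f))
              else 0) +
              ((if j = k then
                ((j : ℚ) * ((i + j - 1 : ℕ) : ℚ)) • (X (j + 1) * (X i * pderiv (i + j - 1) f))
              else 0) +
              (((i + j - 1 : ℕ) : ℚ) * (k : ℚ)) •
                (X i * X j * (X (k + 1) * pderiv (i + j - 1) (pderiv k f)))) := by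
            intro k _
            rw [Derivation.map_smul, pderiv_mul, pderiv_mul, pderiv_comm' k (i + j - 1)]
            by_cases hik : i = k <;> by_cases hjk : j = k
            · rw [if_pos hik, if_pos hjk, hik, hjk]
              simp only [pderiv_X_self, smul_eq_C_mul, map_mul]
              ring
            · rw [if_pos hik, if_neg hjk, hik]
              simp only [pderiv_X_self, pderiv_X_of_ne (fun hc => hjk hc),
                smul_eq_C_mul, map_mul]
              ring
            · rw [if_neg hik, if_pos hjk, hjk]
              simp only [pderiv_X_self, pderiv_X_of_ne (fun hc => hik hc),
                smul_eq_C_mul, map_mul]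
              ring
            · rw [if_neg hik, if_neg hjk]
              simp only [pderiv_X_of_ne (fun hc => hik hc),
                pderiv_X_of_ne (fun hc => hjk hc), smul_eq_C_mul, map_mul]
              ring
          rw [Finset.sum_congr rfl expand, Finset.sum_add_distrib, Finset.sum_add_distrib,
            Finset.sum_ite_eq (range B) i, Finset.sum_ite_eq (range B) j,
            if_pos hi, if_pos hj]
        · simp [h]
    _ = G1' B f + G2' B f + T2 B f := by
        rw [G1', G2', T2]
        simp only [Finset.sum_add_distrib]
        rw [add_assoc]

lemma LSB (N : ℕ) (hf : ∀ k, N ≤ k → pderiv k f = 0) (hB : 2 * N ≤ B) :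
    (∑ k ∈ range B, (k : ℚ) • (X (k + 1) * pderiv k (SB 1 B f)))
      = G4 B f + T4 B f := by
  calc (∑ k ∈ range B, (k : ℚ) • (X (k + 1) * pderiv k (SB 1 B f)))
      = ∑ k ∈ range B, ∑ i ∈ range B, ∑ j ∈ range B, (k : ℚ) •
          (X (k + 1) * pderiv k
            (((i : ℚ) * (j : ℚ)) • (X (i + j + 1) * pderiv i (pderiv j f)))) := by
        refine Finset.sum_congr rfl fun k _ => ?_
        rw [SB, map_sum, Finset.mul_sum, Finset.smul_sum]
        refine Finset.sum_congr rfl fun i _ => ?_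
        rw [map_sum, Finset.mul_sum, Finset.smul_sum]
    _ = ∑ i ∈ range B, ∑ k ∈ range B, ∑ j ∈ range B, (k : ℚ) •
          (X (k + 1) * pderiv k
            (((i : ℚ) * (j : ℚ)) • (X (i + j + 1) * pderiv i (pderiv j f)))) :=
        Finset.sum_comm
    _ = ∑ i ∈ range B, ∑ j ∈ range B, ∑ k ∈ range B, (k : ℚ) •
          (X (k + 1) * pderiv k
            (((i : ℚ) * (j : ℚ)) • (X (i + j + 1) * pderiv i (pderiv j f)))) :=
        Finset.sum_congr rfl fun i _ => Finset.sum_comm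
    _ = ∑ i ∈ range B, ∑ j ∈ range B,
          (((i : ℚ) * (j : ℚ) * ((i + j + 1 : ℕ) : ℚ)) •
              (X (i + j + 2) * pderiv i (pderiv j f)) +
            ∑ k ∈ range B, ((i : ℚ) * (j : ℚ) * (k : ℚ)) •
              (X (i + j + 1) * (X (k + 1) * pderiv i (pderiv j (pderiv k f))))) := by
        refine Finset.sum_congr rfl fun i hi => Finset.sum_congr rfl fun j hj => ?_
        have expand : ∀ k ∈ range B,
            (k : ℚ) • (X (k + 1) * pderiv k
              (((i : ℚ) * (j : ℚ)) • (X (i + j + 1) * pderiv i (pderiv j f)))) =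
            (if i + j + 1 = k then
              ((i : ℚ) * (j : ℚ) * ((i + j + 1 : ℕ) : ℚ)) •
                (X (i + j + 2) * pderiv i (pderiv j f))
            else 0) +
            ((i : ℚ) * (j : ℚ) * (k : ℚ)) •
              (X (i + j + 1) * (X (k + 1) * pderiv i (pderiv j (pderiv k f)))) := by
          intro k _
          rw [Derivation.map_smul, pderiv_mul, pderiv_comm' k i, pderiv_comm' k j]
          by_cases hk : i + j + 1 = k
          · subst hk
            rw [pderiv_X_self, if_pos rfl, show i + j + 1 + 1 = i + j + 2 by omega]
            simp only [smul_eq_C_mul, map_mul]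
            push_cast
            ring
          · rw [pderiv_X_of_ne (fun hc => hk hc), if_neg hk]
            simp only [smul_eq_C_mul, map_mul]
            ring
        rw [Finset.sum_congr rfl expand, Finset.sum_add_distrib,
          Finset.sum_ite_eq (range B) (i + j + 1)]
        congr 1
        by_cases hin : i + j + 1 ∈ range B
        · rw [if_pos hin]
        · rw [if_neg hin]
          rw [mem_range] at hin
          by_cases hNj : N ≤ j
          · rw [hf j hNj]
            simp
          · rw [pderiv_comm', hf i (by omega)]
            simp
    _ = G4 B f + T4 B f := by
        rw [G4, T4]
        simp only [Finset.sum_add_distrib]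


/-! ### Reindexing -/

noncomputable def g1in (m : ℕ) : MvPolynomial ℕ ℚ :=
  ∑ j ∈ range B, if 2 ≤ m ∧ 1 ≤ j then
    (((m - 1 : ℕ) : ℚ) * ((m + j - 2 : ℕ) : ℚ)) • (X m * X j * pderiv (m + j - 2) f)
  else 0

noncomputable def g2tm (i m : ℕ) : MvPolynomial ℕ ℚ :=
  if 1 ≤ i ∧ 2 ≤ m then
    (((m - 1 : ℕ) : ℚ) * ((i + m - 2 : ℕ) : ℚ)) • (X i * X m * pderiv (i + m - 2) f)
  else 0

noncomputable def t3atm (i m : ℕ) : MvPolynomial ℕ ℚ :=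
  ((i : ℚ) * (m : ℚ) * ((m - 1 : ℕ) : ℚ)) • (X (i + m + 1) * pderiv i (pderiv (m - 1) f))

noncomputable def t3bin (m : ℕ) : MvPolynomial ℕ ℚ :=
  ∑ j ∈ range B, ((m : ℚ) * (j : ℚ) * ((m - 1 : ℕ) : ℚ)) •
    (X (m + j + 1) * pderiv j (pderiv (m - 1) f))

lemma G1'_eq (N : ℕ) (hf : ∀ k, N ≤ k → pderiv k f = 0) (hB : N + 2 ≤ B) :
    G1' B f = G1 B f := by
  rw [G1', G1]
  have key : ∀ i ∈ range B,
      (∑ j ∈ range B, if 1 ≤ i ∧ 1 ≤ j ∧ 1 ≤ i + j - 1 then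
        ((i : ℚ) * ((i + j - 1 : ℕ) : ℚ)) • (X (i + 1) * (X j * pderiv (i + j - 1) f))
      else 0) = g1in B f (i + 1) := by
    intro i _
    simp only [g1in]
    refine Finset.sum_congr rfl fun j _ => ?_
    by_cases h : 1 ≤ i ∧ 1 ≤ j
    · rw [if_pos (show 1 ≤ i ∧ 1 ≤ j ∧ 1 ≤ i + j - 1 by omega),
        if_pos (show 2 ≤ i + 1 ∧ 1 ≤ j by omega),
        show i + 1 - 1 = i by omega, show i + 1 + j - 2 = i + j - 1 by omega, ← mul_assoc]
    · rw [if_neg (by omega), if_neg (by omega)]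
  have h0 : g1in B f 0 = 0 := Finset.sum_eq_zero fun j _ => if_neg (by omega)
  have hBz : g1in B f B = 0 := by
    refine Finset.sum_eq_zero fun j _ => ?_
    split_ifs with h
    · rw [hf (B + j - 2) (by omega)]
      simp
    · rfl
  rw [Finset.sum_congr rfl key, sum_shift (g1in B f) B h0 hBz]
  rfl

lemma G2'_eq (N : ℕ) (hf : ∀ k, N ≤ k → pderiv k f = 0) (hB : N + 2 ≤ B) :
    G2' B f = G2 B f := by
  rw [G2', G2]
  refine Finset.sum_congr rfl fun i hi => ?_
  have key : ∀ j ∈ range B,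
      (if 1 ≤ i ∧ 1 ≤ j ∧ 1 ≤ i + j - 1 then
        ((j : ℚ) * ((i + j - 1 : ℕ) : ℚ)) • (X (j + 1) * (X i * pderiv (i + j - 1) f))
      else 0) = g2tm f i (j + 1) := by
    intro j _
    simp only [g2tm]
    by_cases h : 1 ≤ i ∧ 1 ≤ j
    · rw [if_pos (show 1 ≤ i ∧ 1 ≤ j ∧ 1 ≤ i + j - 1 by omega),
        if_pos (show 1 ≤ i ∧ 2 ≤ j + 1 by omega),
        show j + 1 - 1 = j by omega, show i + (j + 1) - 2 = i + j - 1 by omega]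
      simp only [smul_eq_C_mul]
      ring
    · rw [if_neg (by omega), if_neg (by omega)]
  have h0 : g2tm f i 0 = 0 := if_neg (by omega)
  have hBz : g2tm f i B = 0 := by
    simp only [g2tm]
    split_ifs with h
    · rw [hf (i + B - 2) (by omega)]
      simp
    · rfl
  rw [Finset.sum_congr rfl key, sum_shift (g2tm f i) B h0 hBz]
  rfl

lemma T3a_eq (N : ℕ) (hf : ∀ k, N ≤ k → pderiv k f = 0) (hB : N + 1 ≤ B) :
    T3a B f = T3a' B f := by
  rw [T3a, T3a']
  refine Finset.sum_congr rfl fun i hi => ?_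
  have key : ∀ j ∈ range B,
      ((i : ℚ) * ((j : ℚ) + 1) * (j : ℚ)) • (X (i + j + 2) * pderiv i (pderiv j f)) =
        t3atm f i (j + 1) := by
    intro j _
    simp only [t3atm]
    rw [show j + 1 - 1 = j by omega, show i + (j + 1) + 1 = i + j + 2 by omega]
    congr 1
    push_cast
    ring
  have h0 : t3atm f i 0 = 0 := by
    simp [t3atm]
  have hBz : t3atm f i B = 0 := by
    simp only [t3atm]
    rw [hf (B - 1) (by omega)]
    simp
  rw [Finset.sum_congr rfl key, sum_shift (t3atm f i) B h0 hBz]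
  rfl

lemma T3b_eq (N : ℕ) (hf : ∀ k, N ≤ k → pderiv k f = 0) (hB : N + 1 ≤ B) :
    T3b B f = T3b' B f := by
  rw [T3b, T3b']
  have key : ∀ i ∈ range B,
      (∑ j ∈ range B, (((i : ℚ) + 1) * (j : ℚ) * (i : ℚ)) •
        (X (i + j + 2) * pderiv i (pderiv j f))) = t3bin B f (i + 1) := by
    intro i _
    simp only [t3bin]
    refine Finset.sum_congr rfl fun j _ => ?_
    rw [show i + 1 - 1 = i by omega, show i + 1 + j + 1 = i + j + 2 by omega,
      pderiv_comm' i j]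
    congr 1
    push_cast
    ring
  have h0 : t3bin B f 0 = 0 := by
    refine Finset.sum_eq_zero fun j _ => ?_
    simp [t3bin]
  have hBz : t3bin B f B = 0 := by
    refine Finset.sum_eq_zero fun j _ => ?_
    rw [hf (B - 1) (by omega)]
    simp
  rw [Finset.sum_congr rfl key, sum_shift (t3bin B f) B h0 hBz]
  rfl

/-! ### The two halves of the commutator identity -/

lemma Apart : T1 B f - G1 B f - G2 B f = SA 2 B f := by
  rw [T1, G1, G2, SA, ← Finset.sum_sub_distrib, ← Finset.sum_sub_distrib]
  refine Finset.sum_congr rfl fun i _ => ?_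
  rw [← Finset.sum_sub_distrib, ← Finset.sum_sub_distrib]
  refine Finset.sum_congr rfl fun j _ => ?_
  have e1 : ∀ (c : Prop) [Decidable c] (s : ℚ) (p : MvPolynomial ℕ ℚ),
      (if c then s • p else 0) = (if c then s else 0) • p := by
    intro c _ s p
    split_ifs <;> simp
  rw [e1, e1, e1, e1, ← sub_smul, ← sub_smul]
  congr 1
  split_ifs with h1 h2 h3 h4 <;> try (exfalso; omega)
  · rw [Nat.cast_sub (show (1:ℕ) ≤ i + j by omega), Nat.cast_sub (show 2 ≤ i + j by omega),
      Nat.cast_sub (show 1 ≤ i by omega), Nat.cast_sub (show 1 ≤ j by omega)]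
    push_cast
    ring
  · rw [show j = 1 by omega, show i + 1 - 1 = i by omega, show i + 1 - 2 = i - 1 by omega,
      Nat.cast_sub (show 1 ≤ i by omega)]
    push_cast
    ring
  · rw [show i = 1 by omega, show 1 + j - 1 = j by omega, show 1 + j - 2 = j - 1 by omega,
      Nat.cast_sub (show 1 ≤ j by omega)]
    push_cast
    ring
  · rw [show i + j - 2 = 0 by omega]
    simp
  · simp

lemma Bpart : T3a' B f + T3b' B f - G4 B f = SB 2 B f := by
  rw [T3a', T3b', G4, SB, ← Finset.sum_add_distrib, ← Finset.sum_sub_distrib]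
  refine Finset.sum_congr rfl fun i _ => ?_
  rw [← Finset.sum_add_distrib, ← Finset.sum_sub_distrib]
  refine Finset.sum_congr rfl fun j _ => ?_
  rw [← add_smul, ← sub_smul]
  congr 1
  push_cast
  ring

end CutJoin

/-- [M₁, Λ₁] = M₂ as operators on ℚ[q₁, q₂, …]. -/
theorem commutator_M1_Lam1 :
    ∀ f : MvPolynomial ℕ ℚ, M 1 (Lam1 f) - Lam1 (M 1 f) = M 2 f := by
  intro f
  obtain ⟨N, hN1, hf⟩ := CutJoin.exists_bound f
  have hBL := CutJoin.bnd_Lam1 N f hf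
  have h1 : M 1 (Lam1 f) = (1/2 : ℚ) •
      (CutJoin.SA 1 (2*N+4) (Lam1 f) + CutJoin.SB 1 (2*N+4) (Lam1 f)) :=
    CutJoin.M_eq 1 (N+1) (2*N+4) (Lam1 f) hBL (by omega)
  have h2 : Lam1 (M 1 f) =
      ∑ k ∈ Finset.range (2*N+4), (k : ℚ) • (X (k+1) * pderiv k (M 1 f)) :=
    CutJoin.Lam1_eq (2*N+1) (2*N+4) (M 1 f) (CutJoin.bnd_M1 N f hf) (by omega)
  have h3 : M 2 f = (1/2 : ℚ) • (CutJoin.SA 2 (2*N+4) f + CutJoin.SB 2 (2*N+4) f) :=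
    CutJoin.M_eq 2 N (2*N+4) f hf (by omega)
  have h4 : ∀ k : ℕ, pderiv k (M 1 f) = (1/2 : ℚ) •
      (pderiv k (CutJoin.SA 1 (2*N+4) f) + pderiv k (CutJoin.SB 1 (2*N+4) f)) := by
    intro k
    rw [CutJoin.M_eq 1 N (2*N+4) f hf (by omega), Derivation.map_smul, map_add]
  have h5 : (∑ k ∈ Finset.range (2*N+4), (k : ℚ) • (X (k+1) * pderiv k (M 1 f))) =
      (1/2 : ℚ) •
      ((∑ k ∈ Finset.range (2*N+4), (k:ℚ) • (X (k+1) * pderiv k (CutJoin.SA 1 (2*N+4) f))) +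
       (∑ k ∈ Finset.range (2*N+4), (k:ℚ) • (X (k+1) * pderiv k (CutJoin.SB 1 (2*N+4) f)))) := by
    rw [smul_add, Finset.smul_sum, Finset.smul_sum, ← Finset.sum_add_distrib]
    refine Finset.sum_congr rfl fun k _ => ?_
    rw [h4 k, mul_smul_comm, smul_comm ((k:ℚ)) ((1/2:ℚ)), mul_add, smul_add, smul_add]
  rw [h1, h2, h5, h3,
    CutJoin.SAL_eq (2*N+4) f N hf (by omega),
    CutJoin.SBL_eq (2*N+4) f N hf (by omega),
    CutJoin.LSA (2*N+4) f N hf,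
    CutJoin.LSB (2*N+4) f N hf (by omega),
    CutJoin.G1'_eq (2*N+4) f N hf (by omega),
    CutJoin.G2'_eq (2*N+4) f N hf (by omega),
    CutJoin.T3a_eq (2*N+4) f N hf (by omega),
    CutJoin.T3b_eq (2*N+4) f N hf (by omega),
    ← CutJoin.Apart (2*N+4) f, ← CutJoin.Bpart (2*N+4) f]
  rw [← smul_sub]
  congr 1
  abel
end
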